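/- Let r, s ∈ ℤ[1/2] with r ≠ 0 and s ≠ 0, let m, n, k ∈ ℤ, and let x ∈ H with b·x·b⁻¹ = ι(0,k). Then the element w = b⁻¹·ι(r,m)·b·x·b⁻¹·ι(s,n)·b of H lies in the image of ι if and only if r + 2^{m+k}·s = 0; and in that case w = ι(m + k + n, 0) (equivalently, ι(n + log₂(−r/s), 0), noting that −r/s = 2^{m+k} under the condition). -/

import Mathlib

/-- The dyadic rationals `ℤ[1/2] = {p/2^q : p,q ∈ ℤ}`. -/
def IsDyadic (x : ℚ) : Prop := ∃ p : ℤ, ∃ q : ℕ, x = p / 2 ^ q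

theorem IsDyadic.add {x y : ℚ} (hx : IsDyadic x) (hy : IsDyadic y) :
    IsDyadic (x + y) := by
  obtain ⟨p, q, rfl⟩ := hx
  obtain ⟨p', q', rfl⟩ := hy
  refine ⟨p * 2 ^ q' + p' * 2 ^ q, q + q', ?_⟩
  have h2 : (2 : ℚ) ≠ 0 := two_ne_zero
  push_cast
  rw [pow_add]
  field_simp

theorem IsDyadic.neg {x : ℚ} (hx : IsDyadic x) : IsDyadic (-x) := by
  obtain ⟨p, q, rfl⟩ := hx
  exact ⟨-p, q, by push_cast; ring⟩

theorem IsDyadic.zpow_mul (m : ℤ) {x : ℚ} (hx : IsDyadic x) :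
    IsDyadic ((2 : ℚ) ^ m * x) := by
  obtain ⟨p, q, rfl⟩ := hx
  have h2 : (2 : ℚ) ≠ 0 := two_ne_zero
  rcases Int.eq_nat_or_neg m with ⟨a, rfl | rfl⟩
  · refine ⟨p * 2 ^ a, q, ?_⟩
    rw [zpow_natCast]
    push_cast
    field_simp
  · refine ⟨p, q + a, ?_⟩
    rw [zpow_neg, zpow_natCast, pow_add]
    field_simp

/-- The underlying set of `ℤ[1/2]`. -/
abbrev Dy : Type := {x : ℚ // IsDyadic x}

/-- The carrier `ℤ[1/2] × ℤ` of the Baumslag–Solitar group `BS(1,2) = ℤ[1/2] ⋊ ℤ`. -/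
def BS12 : Type := Dy × ℤ

/-- The group structure of the semidirect product `ℤ[1/2] ⋊ ℤ`, where `n ∈ ℤ` acts on
`ℤ[1/2]` by `x ↦ 2^n·x`: multiplication `(r,m)·(s,n) = (r + 2^m·s, m+n)`. -/
instance : Group BS12 where
  mul g h := (⟨g.1.1 + 2 ^ g.2 * h.1.1, g.1.2.add (IsDyadic.zpow_mul g.2 h.1.2)⟩,
    g.2 + h.2)
  one := (⟨0, 0, 0, by norm_num⟩, 0)
  inv g := (⟨-((2 : ℚ) ^ (-g.2) * g.1.1), (IsDyadic.zpow_mul (-g.2) g.1.2).neg⟩, -g.2)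
  mul_assoc g h k := by
    show Prod.mk _ _ = Prod.mk _ _
    have h2 : (2 : ℚ) ≠ 0 := two_ne_zero
    refine Prod.ext ?_ ?_
    · apply Subtype.ext
      show (g.1.1 + 2 ^ g.2 * h.1.1) + 2 ^ (g.2 + h.2) * k.1.1
        = g.1.1 + 2 ^ g.2 * (h.1.1 + 2 ^ h.2 * k.1.1)
      rw [zpow_add₀ h2]
      ring
    · show g.2 + h.2 + k.2 = g.2 + (h.2 + k.2)
      ring
  one_mul g := by
    show Prod.mk _ _ = g
    refine Prod.ext ?_ ?_
    · apply Subtype.ext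
      show (0 : ℚ) + 2 ^ (0 : ℤ) * g.1.1 = g.1.1
      simp
    · show (0 : ℤ) + g.2 = g.2
      simp
  mul_one g := by
    show Prod.mk _ _ = g
    refine Prod.ext ?_ ?_
    · apply Subtype.ext
      show g.1.1 + 2 ^ g.2 * (0 : ℚ) = g.1.1
      simp
    · show g.2 + (0 : ℤ) = g.2
      simp
  inv_mul_cancel g := by
    show Prod.mk _ _ = Prod.mk _ _
    refine Prod.ext ?_ ?_
    · apply Subtype.ext
      show -((2 : ℚ) ^ (-g.2) * g.1.1) + 2 ^ (-g.2) * g.1.1 = 0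
      ring
    · show -g.2 + g.2 = 0
      ring

/-- The element `(r, m)` of `ℤ[1/2] ⋊ ℤ`. -/
def BS12.mk (r : Dy) (m : ℤ) : BS12 := (r, m)

/-- `0 ∈ ℤ[1/2]`. -/
def Dy.zero : Dy := ⟨0, 0, 0, by norm_num⟩

/-- An integer, viewed as an element of `ℤ[1/2]`. -/
def Dy.ofInt (z : ℤ) : Dy := ⟨(z : ℚ), z, 0, by norm_num⟩

/-- The subgroup `A = {(q,0) : q ∈ ℤ}` of `ℤ[1/2] ⋊ ℤ`. -/
def subA : Subgroup BS12 where
  carrier := {g | (∃ z : ℤ, g.1.1 = (z : ℚ)) ∧ g.2 = 0}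
  one_mem' := ⟨⟨0, show (0 : ℚ) = ((0 : ℤ) : ℚ) by norm_num⟩, rfl⟩
  mul_mem' := by
    rintro g h ⟨⟨z1, hz1⟩, hg2⟩ ⟨⟨z2, hz2⟩, hh2⟩
    constructor
    · refine ⟨z1 + z2, ?_⟩
      show g.1.1 + 2 ^ g.2 * h.1.1 = ((z1 + z2 : ℤ) : ℚ)
      rw [hz1, hz2, hg2, zpow_zero]
      push_cast
      ring
    · show g.2 + h.2 = 0
      rw [hg2, hh2]
      ring
  inv_mem' := by
    rintro g ⟨⟨z, hz⟩, hg2⟩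
    constructor
    · refine ⟨-z, ?_⟩
      show -((2 : ℚ) ^ (-g.2) * g.1.1) = ((-z : ℤ) : ℚ)
      rw [hz, hg2]
      push_cast
      ring
    · show -g.2 = 0
      rw [hg2]
      ring

/-- The subgroup `B = {(0,k) : k ∈ ℤ}` of `ℤ[1/2] ⋊ ℤ`. -/
def subB : Subgroup BS12 where
  carrier := {g | g.1.1 = 0}
  one_mem' := show (0 : ℚ) = 0 from rfl
  mul_mem' := by
    intro g h hg hh
    show g.1.1 + 2 ^ g.2 * h.1.1 = 0
    rw [hg, hh]
    ring
  inv_mem' := by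
    intro g hg
    show -((2 : ℚ) ^ (-g.2) * g.1.1) = 0
    rw [hg]
    ring

/-- The isomorphism `φ : A → B`, `(q,0) ↦ (0,q)`. -/
def phiAB : subA ≃* subB where
  toFun g := ⟨(Dy.zero, g.1.1.1.num), rfl⟩
  invFun g := ⟨(Dy.ofInt g.1.2, 0), ⟨⟨g.1.2, rfl⟩, rfl⟩⟩
  left_inv g := by
    obtain ⟨⟨z, hz⟩, hg2⟩ := g.2
    apply Subtype.ext
    refine Prod.ext ?_ ?_
    · apply Subtype.ext
      show ((g.1.1.1.num : ℤ) : ℚ) = g.1.1.1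
      rw [hz, Rat.num_intCast]
    · exact hg2.symm
  right_inv g := by
    have hg : g.1.1.1 = 0 := g.2
    apply Subtype.ext
    refine Prod.ext ?_ ?_
    · apply Subtype.ext
      show (0 : ℚ) = g.1.1.1
      exact hg.symm
    · show (Dy.ofInt g.1.2).1.num = g.1.2
      show ((g.1.2 : ℤ) : ℚ).num = g.1.2
      rw [Rat.num_intCast]
  map_mul' g h := by
    obtain ⟨⟨z1, hz1⟩, hg2⟩ := g.2
    obtain ⟨⟨z2, hz2⟩, hh2⟩ := h.2
    apply Subtype.ext
    refine Prod.ext ?_ ?_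
    · apply Subtype.ext
      show (0 : ℚ) = (0 : ℚ) + 2 ^ ((g.1.1.1.num : ℤ)) * 0
      ring
    · show (g.1.1.1 + 2 ^ g.1.2 * h.1.1.1).num = g.1.1.1.num + h.1.1.1.num
      rw [hz1, hz2, hg2, zpow_zero, one_mul, ← Int.cast_add, Rat.num_intCast,
        Rat.num_intCast, Rat.num_intCast]

/-- The Baumslag group as the HNN extension `H = HNN(G, A, B, φ)` of
`G = ℤ[1/2] ⋊ ℤ`, with stable letter `b` satisfying `b·g·b⁻¹ = φ(g)` for `g ∈ A`. -/
abbrev BaumslagH : Type := HNNExtension BS12 subA subB phiAB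

/-- The stable letter `b` of the HNN extension. -/
def bH : BaumslagH := HNNExtension.t

/-- The canonical embedding `ι : G → H` of the base group. -/
def iH : BS12 →* BaumslagH := HNNExtension.of


/-- Let `r, s ∈ ℤ[1/2]` with `r ≠ 0 ≠ s`, `m, n, k ∈ ℤ`, and
`x ∈ H` with `b·x·b⁻¹ = ι(0,k)`.  Then `w = b⁻¹·ι(r,m)·b·x·b⁻¹·ι(s,n)·b` lies in the
image of `ι` iff `r + 2^{m+k}·s = 0`; and in that case `w = ι(m + k + n, 0)`. -/
theorem britton_case_binv_b (r s : Dy) (hr : (r : ℚ) ≠ 0) (hs : (s : ℚ) ≠ 0)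
    (m n k : ℤ) (x : BaumslagH)
    (hx : bH * x * bH⁻¹ = iH (BS12.mk Dy.zero k)) :
    ((∃ g : BS12,
        bH⁻¹ * iH (BS12.mk r m) * bH * x * bH⁻¹ * iH (BS12.mk s n) * bH = iH g)
      ↔ (r : ℚ) + 2 ^ (m + k) * (s : ℚ) = 0)
    ∧ ((r : ℚ) + 2 ^ (m + k) * (s : ℚ) = 0 →
        bH⁻¹ * iH (BS12.mk r m) * bH * x * bH⁻¹ * iH (BS12.mk s n) * bH
          = iH (BS12.mk (Dy.ofInt (m + k + n)) 0)) := by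
  classical
  set g0 : BS12 := BS12.mk r m * BS12.mk Dy.zero k * BS12.mk s n with hg0
  have hg01 : (g0.1 : ℚ) = ((r : ℚ) + 2 ^ m * 0) + 2 ^ (m + k) * (s : ℚ) := rfl
  have hg02 : g0.2 = m + k + n := rfl
  have hw : bH⁻¹ * iH (BS12.mk r m) * bH * x * bH⁻¹ * iH (BS12.mk s n) * bH
      = bH⁻¹ * iH g0 * bH := by
    rw [hg0, map_mul, map_mul, ← hx]
    group
  have hB : g0 ∈ subB ↔ (r : ℚ) + 2 ^ (m + k) * (s : ℚ) = 0 := by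
    show (g0.1 : ℚ) = 0 ↔ _
    rw [hg01]; ring_nf
  constructor
  · constructor
    · rintro ⟨g, hg⟩
      by_contra hcond
      have hg0B : g0 ∉ subB := fun h => hcond (hB.1 h)
      let w : HNNExtension.NormalWord.ReducedWord BS12 subA subB :=
        { head := 1
          toList := [(-1, g0), (1, 1)]
          chain := by
            refine List.isChain_cons_cons.2 ⟨?_, List.isChain_singleton _⟩
            intro h
            exact absurd h hg0B }
      have hwprod : w.prod phiAB = bH⁻¹ * iH g0 * bH := by
        simp only [HNNExtension.NormalWord.ReducedWord.prod, w, List.map_cons,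
          List.map_nil, List.prod_cons, List.prod_nil, map_one, one_mul, mul_one,
          Units.val_neg, Units.val_one, zpow_neg, zpow_one]
        rfl
      have := HNNExtension.ReducedWord.toList_eq_nil_of_mem_of_range
        phiAB w (by rw [hwprod, ← hw, hg]; exact ⟨g, rfl⟩)
      simp [w] at this
    · intro hcond
      refine ⟨BS12.mk (Dy.ofInt (m + k + n)) 0, ?_⟩
      rw [hw]
      have hg0B : g0 ∈ subB := hB.2 hcond
      have := (HNNExtension.equiv_symm_eq_conj (φ := phiAB) ⟨g0, hg0B⟩).symm
      refine this.trans ?_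
      rfl
  · intro hcond
    rw [hw]
    have hg0B : g0 ∈ subB := hB.2 hcond
    exact (HNNExtension.equiv_symm_eq_conj (φ := phiAB) ⟨g0, hg0B⟩).symm.trans rfl
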